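/- Let S be a commutative ring, σ ∈ Aut(S) of order n with fixed ring S_0, a, b, α ∈ S^×. If there is a Hamming-weight preserving isomorphism G : S_a → S_b with G|_S = τ for some τ ∈ Aut(S) commuting with σ, then the subgroups of S^× generated by {b} ∪ N_m^σ(S^×) and by {τ(a)} ∪ N_m^σ(S^×) are equal. -/

import Mathlib

open Finset

noncomputable section

namespace PetitFormal

variable {S : Type*}

/-- Partial norm `N_i^τ(β) = ∏_{j=0}^{i-1} τ^j(β)`. -/
def pnorm [CommRing S] (τ : RingAut S) (i : ℕ) (β : S) : S :=
  ∏ j ∈ Finset.range i, (τ ^ j) β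

/-- Multiplication in the skew polynomial ring `S[t;σ]`, with `t·a = σ(a)·t`,
modelled on finitely supported functions `ℕ →₀ S`. -/
def skewMul [CommRing S] (σ : RingAut S) (x y : ℕ →₀ S) : ℕ →₀ S :=
  x.sum fun i c => y.sum fun j d => Finsupp.single (i + j) (c * (σ ^ i) d)

/-- Embedding of degree `< m` polynomials into `ℕ →₀ S`. -/
def toPoly [CommRing S] {m : ℕ} (x : Fin m → S) : ℕ →₀ S :=
  ∑ i : Fin m, Finsupp.single (i : ℕ) (x i)

/-- One pass of right division by the monic polynomial `f = t^m - f0(t)`: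
`reduceAux σ m f0 K` reduces a skew polynomial supported in `[0, m+K)`
to one supported in `[0, m)`, using `t^{m+j} ≡ ∑_i σ^j(f0 i) t^{j+i}` (mod_r f). -/
def reduceAux [CommRing S] (σ : RingAut S) (m : ℕ) (f0 : Fin m → S) :
    ℕ → (ℕ →₀ S) → (ℕ →₀ S)
  | 0, x => x
  | K + 1, x =>
      reduceAux σ m f0 K
        (x - Finsupp.single (m + K) (x (m + K))
          + ∑ j : Fin m, Finsupp.single (K + (j : ℕ)) (x (m + K) * (σ ^ K) (f0 j)))

/-- Multiplication in the (generally nonassociative) Petit algebra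
`S_f = S[t;σ]/S[t;σ](t^m - f0(t))`: multiply in `S[t;σ]` and reduce by right
division by `f = t^m - f0(t)`. -/
def petitMul [CommRing S] (σ : RingAut S) (m : ℕ) (f0 : Fin m → S)
    (x y : Fin m → S) : Fin m → S :=
  fun d => (reduceAux σ m f0 m (skewMul σ (toPoly x) (toPoly y))) (d : ℕ)

/-- The coefficient vector of the constant `a`, so that `t^m - f0 = t^m - a`. -/
def constF [CommRing S] (m : ℕ) (a : S) : Fin m → S :=
  fun i => if (i : ℕ) = 0 then a else 0

/-- Multiplication in the Petit algebra `S_a = S[t;σ]/S[t;σ](t^m - a)`. -/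
def petitMulC [CommRing S] (σ : RingAut S) (m : ℕ) (a : S) :
    (Fin m → S) → (Fin m → S) → (Fin m → S) :=
  petitMul σ m (constF m a)

/-- The monomial `c t^k` as an element of the Petit algebra (zero if `k ≥ m`). -/
def mono [CommRing S] (m : ℕ) (c : S) (k : ℕ) : Fin m → S :=
  fun i => if (i : ℕ) = k then c else 0

/-- The identity `1 = 1·t^0` of the Petit algebra. -/
def pone [CommRing S] (m : ℕ) : Fin m → S := mono m 1 0

/-- Left-nested power `L(z,s) = z(z(⋯(z)))` (`s` factors) in the Petit algebra. -/
def lpow [CommRing S] (σ : RingAut S) (m : ℕ) (f0 : Fin m → S) (z : Fin m → S) :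
    ℕ → Fin m → S
  | 0 => pone m
  | s + 1 => petitMul σ m f0 z (lpow σ m f0 z s)

/-- `G` is a (unital) ring homomorphism from the Petit algebra `S_f` to `S_g`. -/
def IsPetitHom [CommRing S] (σ : RingAut S) (m : ℕ) (f0 g0 : Fin m → S)
    (G : (Fin m → S) → (Fin m → S)) : Prop :=
  (∀ x y, G (x + y) = G x + G y) ∧
  (∀ x y, G (petitMul σ m f0 x y) = petitMul σ m g0 (G x) (G y)) ∧
  G (pone m) = pone m

/-- `G` is a (unital) ring endomorphism of the skew polynomial ring `S[t;σ]`. -/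
def IsSkewHom [CommRing S] (σ : RingAut S) (G : (ℕ →₀ S) → (ℕ →₀ S)) : Prop :=
  (∀ x y, G (x + y) = G x + G y) ∧
  (∀ x y, G (skewMul σ x y) = skewMul σ (G x) (G y)) ∧
  G (Finsupp.single 0 1) = Finsupp.single 0 1

/-- `G` is a (unital) ring homomorphism from `S[t;σ]` to the Petit algebra `S_g`. -/
def IsSkewToPetitHom [CommRing S] (σ : RingAut S) (m : ℕ) (g0 : Fin m → S)
    (G : (ℕ →₀ S) → (Fin m → S)) : Prop :=
  (∀ x y, G (x + y) = G x + G y) ∧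
  (∀ x y, G (skewMul σ x y) = petitMul σ m g0 (G x) (G y)) ∧
  G (Finsupp.single 0 1) = pone m

/-- The monomial map `G_{τ,α,k}` on `S[t;σ]`:
`∑ a_i t^i ↦ ∑ τ(a_i) (α t^k)^i = ∑ τ(a_i) N_i^{σ^k}(α) t^{ik}`. -/
def skewMonomialMap [CommRing S] (σ τ : RingAut S) (α : S) (k : ℕ)
    (x : ℕ →₀ S) : ℕ →₀ S :=
  x.sum fun i c => Finsupp.single (i * k) (τ c * pnorm (σ ^ k) i α)

/-- The monomial map `G_{τ,α,k}` from `S[t;σ]` into the Petit algebra `S_g`: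
`∑ a_i t^i ↦ ∑ τ(a_i) (α t^k)^i`, powers computed by left nesting. -/
def skewToPetitMonomialMap [CommRing S] (σ τ : RingAut S) (m : ℕ)
    (g0 : Fin m → S) (α : S) (k : ℕ) (x : ℕ →₀ S) : Fin m → S :=
  x.sum fun i c => τ c • lpow σ m g0 (mono m α k) i

/-- The monomial map `G_{τ,α,k}` between Petit algebras of degree `m`:
`∑_{i<m} a_i t^i ↦ ∑_{i<m} τ(a_i) (α t^k)^i`, powers computed by left nesting
in the codomain `S_g`. -/
def petitMonomialMap [CommRing S] (σ τ : RingAut S) (m : ℕ)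
    (g0 : Fin m → S) (α : S) (k : ℕ) (x : Fin m → S) : Fin m → S :=
  ∑ i : Fin m, τ (x i) • lpow σ m g0 (mono m α k) (i : ℕ)

/-- The Hamming weight: the number of nonzero coefficients. -/
def hwt [CommRing S] {m : ℕ} (x : Fin m → S) : ℕ := by
  classical exact (Finset.univ.filter fun i => x i ≠ 0).card

end PetitFormal

open PetitFormal
section AuxA
variable {S : Type*} [CommRing S]

lemma skewMul_single (σ : RingAut S) (i j : ℕ) (c d : S) :
    skewMul σ (Finsupp.single i c) (Finsupp.single j d)
      = Finsupp.single (i + j) (c * (σ ^ i) d) := by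
  classical
  unfold skewMul
  rw [Finsupp.sum_single_index (by simp), Finsupp.sum_single_index (by simp)]

lemma toPoly_mono {m : ℕ} (c : S) {k : ℕ} (hk : k < m) :
    toPoly (mono m c k) = Finsupp.single k c := by
  classical
  unfold toPoly mono
  rw [Finset.sum_eq_single (⟨k, hk⟩ : Fin m)]
  · simp
  · intro i _ hne
    have h : (i : ℕ) ≠ k := fun h => hne (Fin.ext h)
    simp [h]
  · simp

lemma reduceAux_single_lt (σ : RingAut S) {m : ℕ} (f0 : Fin m → S) {D : ℕ} (v : S)
    (hD : D < m) : ∀ K, reduceAux σ m f0 K (Finsupp.single D v) = Finsupp.single D v := by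
  intro K
  induction K with
  | zero => rfl
  | succ K ih =>
    unfold reduceAux
    have h0 : (Finsupp.single D v : ℕ →₀ S) (m + K) = 0 :=
      Finsupp.single_eq_of_ne (by omega)
    rw [h0]
    simp only [Finsupp.single_zero, sub_zero, zero_mul, Finset.sum_const_zero, add_zero]
    exact ih

lemma reduceAux_single_high (σ : RingAut S) {m : ℕ} (hm : 0 < m) (a : S) {r : ℕ} (v : S)
    (hr : r < m) : ∀ K, r < K →
    reduceAux σ m (constF m a) K (Finsupp.single (m + r) v)
      = Finsupp.single r (v * (σ ^ r) a) := by
  intro K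
  induction K with
  | zero => omega
  | succ K ih =>
    intro hrK
    unfold reduceAux
    rcases lt_or_eq_of_le (Nat.lt_succ_iff.mp hrK) with h | h
    · have h0 : (Finsupp.single (m + r) v : ℕ →₀ S) (m + K) = 0 :=
        Finsupp.single_eq_of_ne (by omega)
      rw [h0]
      simp only [Finsupp.single_zero, sub_zero, zero_mul, Finset.sum_const_zero, add_zero]
      exact ih h
    · subst h
      have hsum : (∑ j : Fin m, Finsupp.single (r + (j : ℕ))
            (v * (σ ^ r) (constF m a j)) : ℕ →₀ S)
          = Finsupp.single r (v * (σ ^ r) a) := by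
        rw [Finset.sum_eq_single (⟨0, hm⟩ : Fin m)]
        · simp [constF]
        · intro j _ hne
          have h : (j : ℕ) ≠ 0 := fun h => hne (Fin.ext h)
          simp [constF, h]
        · simp
      rw [Finsupp.single_eq_same, sub_self, zero_add, hsum]
      exact reduceAux_single_lt σ _ _ hr _

lemma single_coe_eq_mono {m : ℕ} {D : ℕ} (v : S) :
    (fun d : Fin m => (Finsupp.single D v : ℕ →₀ S) (d : ℕ)) = mono m v D := by
  funext d
  rw [Finsupp.single_apply]
  unfold mono
  exact if_congr eq_comm rfl rfl

lemma petitMul_mono_lt (σ : RingAut S) {m : ℕ} (a : S) {i j : ℕ} (c d : S)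
    (hi : i < m) (hj : j < m) (hij : i + j < m) :
    petitMul σ m (constF m a) (mono m c i) (mono m d j)
      = mono m (c * (σ ^ i) d) (i + j) := by
  funext e
  simp only [petitMul]
  rw [toPoly_mono c hi, toPoly_mono d hj, skewMul_single,
    reduceAux_single_lt σ _ _ hij m]
  exact congrFun (single_coe_eq_mono _) e

lemma petitMul_mono_ge (σ : RingAut S) {m : ℕ} (a : S) {i j : ℕ} (c d : S)
    (hi : i < m) (hj : j < m) (hij : m ≤ i + j) :
    petitMul σ m (constF m a) (mono m c i) (mono m d j)
      = mono m (c * (σ ^ i) d * (σ ^ (i + j - m)) a) (i + j - m) := by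
  funext e
  simp only [petitMul]
  have hm : 0 < m := by omega
  have hexp : i + j = m + (i + j - m) := by omega
  rw [toPoly_mono c hi, toPoly_mono d hj, skewMul_single]
  have key := reduceAux_single_high σ hm a (c * (σ ^ i) d)
    (show i + j - m < m by omega) m (show i + j - m < m by omega)
  conv_lhs => rw [hexp]
  rw [key]
  exact congrFun (single_coe_eq_mono _) e

end AuxA
section AuxB
variable {S : Type*} [CommRing S]

lemma pow_succ_apply (σ : RingAut S) (s : ℕ) (x : S) :
    σ ((σ ^ s) x) = (σ ^ (s + 1)) x := by
  rw [pow_succ']; rfl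

lemma ringAut_one_apply (x : S) : (1 : RingAut S) x = x := rfl

lemma pnorm_one_eq (σ : RingAut S) (α : S) : pnorm σ 1 α = α := by
  simp [pnorm, ringAut_one_apply]

lemma pnorm_add (σ : RingAut S) (i j : ℕ) (α : S) :
    pnorm σ (i + j) α = pnorm σ i α * (σ ^ i) (pnorm σ j α) := by
  unfold pnorm
  rw [Finset.prod_range_add, map_prod]
  refine congrArg _ (Finset.prod_congr rfl fun x _ => ?_)
  rw [pow_add]; rfl

lemma pnorm_succ (σ : RingAut S) (s : ℕ) (α : S) :
    pnorm σ (s + 1) α = α * σ (pnorm σ s α) := by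
  rw [show s + 1 = 1 + s by omega, pnorm_add, pnorm_one_eq, pow_one]

lemma isUnit_pnorm (σ : RingAut S) (s : ℕ) {α : S} (h : IsUnit α) :
    IsUnit (pnorm σ s α) := by
  induction s with
  | zero => simp [pnorm]
  | succ s ih =>
    rw [pnorm_succ]
    exact h.mul (ih.map (σ : S ≃+* S))

def Cc (σ : RingAut S) (b α : S) (k m : ℕ) : ℕ → S
  | 0 => 1
  | s + 1 => α * (σ ^ k) (Cc σ b α k m s) *
      (if k + (s * k % m) < m then 1 else (σ ^ ((s + 1) * k % m)) b)

lemma mono_add {m : ℕ} (c d : S) (D : ℕ) :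
    mono m c D + mono m d D = mono m (c + d) D := by
  funext e
  simp only [Pi.add_apply, mono]
  split <;> simp

lemma mono0_mul (σ : RingAut S) {m : ℕ} (b c d : S) {j : ℕ} (hm : 0 < m) (hj : j < m) :
    petitMul σ m (constF m b) (mono m c 0) (mono m d j) = mono m (c * d) j := by
  rw [petitMul_mono_lt σ b c d hm hj (by omega)]
  simp [ringAut_one_apply]

lemma lpow_mono (σ : RingAut S) {m : ℕ} (b α : S) {k : ℕ} (hk : k < m) (hm : 2 ≤ m) :
    ∀ s, lpow σ m (constF m b) (mono m α k) s
      = mono m (Cc σ b α k m s) (s * k % m) := by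
  intro s
  induction s with
  | zero => simp [lpow, Cc, pone]
  | succ s ih =>
    have hD : s * k % m < m := Nat.mod_lt _ (by omega)
    have hsm : (s + 1) * k = m * (s * k / m) + (s * k % m + k) := by
      have h1 := Nat.div_add_mod (s * k) m
      have h2 : (s + 1) * k = s * k + k := by ring
      omega
    simp only [lpow]
    rw [ih]
    by_cases hw : k + s * k % m < m
    · rw [petitMul_mono_lt σ b α (Cc σ b α k m s) hk hD hw]
      have hmod : (s + 1) * k % m = k + s * k % m := by
        rw [hsm, Nat.mul_add_mod]
        rw [Nat.mod_eq_of_lt (by omega)]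
        omega
      rw [hmod]
      show _ = mono m (Cc σ b α k m (s + 1)) _
      rw [Cc, if_pos hw, mul_one]
    · push_neg at hw
      rw [petitMul_mono_ge σ b α (Cc σ b α k m s) hk hD (by omega)]
      have hmod : (s + 1) * k % m = k + s * k % m - m := by
        rw [hsm, Nat.mul_add_mod]
        rw [Nat.mod_eq_sub_mod (by omega), Nat.mod_eq_of_lt (by omega)]
        omega
      have hidx : k + s * k % m - m = (s + 1) * k % m := hmod.symm
      rw [hidx]
      show _ = mono m (Cc σ b α k m (s + 1)) _
      rw [Cc, if_neg (by omega)]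

end AuxB

section AuxC
variable {S : Type*} [CommRing S]

lemma hwt_def {m : ℕ} (x : Fin m → S) [DecidablePred fun i : Fin m => x i ≠ 0] :
    hwt x = (Finset.univ.filter fun i => x i ≠ 0).card := by
  unfold hwt; congr!

lemma hwt_le_one {m : ℕ} (c : S) (D : ℕ) : hwt (mono m c D) ≤ 1 := by
  classical
  rw [hwt_def]
  apply Finset.card_le_one.mpr
  intro i hi j hj
  simp only [Finset.mem_filter] at hi hj
  unfold mono at hi hj
  by_cases h1 : (i : ℕ) = D
  · by_cases h2 : (j : ℕ) = D
    · exact Fin.ext (h1.trans h2.symm)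
    · simp [h2] at hj
  · simp [h1] at hi

lemma hwt_mono {m : ℕ} {c : S} (hc : c ≠ 0) {D : ℕ} (hD : D < m) :
    hwt (mono m c D) = 1 := by
  classical
  rw [hwt_def]
  rw [show (Finset.univ.filter fun i : Fin m => mono m c D i ≠ 0) = {⟨D, hD⟩} from ?_]
  · simp
  · ext i
    simp only [Finset.mem_filter, Finset.mem_univ, true_and, Finset.mem_singleton, mono]
    constructor
    · intro h
      by_cases h1 : (i : ℕ) = D
      · exact Fin.ext h1
      · simp [h1] at h
    · intro h; subst h; simpa using hc

lemma exists_of_hwt_one {m : ℕ} (x : Fin m → S) (h : hwt x = 1) :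
    ∃ i : Fin m, x = mono m (x i) (i : ℕ) ∧ x i ≠ 0 := by
  classical
  rw [hwt_def] at h
  obtain ⟨i, hi⟩ := Finset.card_eq_one.mp h
  have hmem : ∀ j : Fin m, x j ≠ 0 ↔ j = i := by
    intro j
    rw [← Finset.mem_singleton, ← hi]
    simp
  refine ⟨i, ?_, (hmem i).mpr rfl⟩
  funext j
  unfold mono
  by_cases hj : (j : ℕ) = (i : ℕ)
  · rw [if_pos hj]
    exact congrArg x (Fin.ext hj)
  · rw [if_neg hj]
    by_contra hne
    exact hj (congrArg Fin.val ((hmem j).mp hne))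

lemma hwt_pair {m : ℕ} {i j : ℕ} (hi : i < m) (hj : j < m) (hne : i ≠ j)
    (h1 : (1 : S) ≠ 0) :
    hwt (mono m (1 : S) i + mono m 1 j) = 2 := by
  classical
  set x : Fin m → S := mono m (1 : S) i + mono m 1 j with hx
  rw [hwt_def]
  have hset : (Finset.univ.filter fun e : Fin m => x e ≠ 0) = {⟨i, hi⟩, ⟨j, hj⟩} := by
    ext e
    simp only [Finset.mem_filter, Finset.mem_univ, true_and, Finset.mem_insert,
      Finset.mem_singleton, hx, Pi.add_apply, mono, Fin.ext_iff]
    by_cases he1 : (e : ℕ) = i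
    · simp [he1, (show i ≠ j from hne), h1]
    · by_cases he2 : (e : ℕ) = j
      · simp [he1, he2, h1, Ne.symm hne]
      · simp [he1, he2]
  rw [hset, Finset.card_insert_of_notMem (by simp [Fin.ext_iff, hne]),
    Finset.card_singleton]

end AuxC
section AuxD
variable {S : Type*} [CommRing S]

lemma mono_coeff_inj {m : ℕ} {c d : S} {i : ℕ} (hi : i < m)
    (h : mono m c i = mono m d i) : c = d := by
  have h2 := congrFun h ⟨i, hi⟩
  simpa [mono] using h2

lemma eq_m_of_dvd {m s : ℕ} (hm : 0 < m) (hdvd : m ∣ s) (h0 : s ≠ 0) (h2 : s < 2 * m) :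
    s = m := by
  obtain ⟨c, rfl⟩ := hdvd
  have h3 : ¬ 2 ≤ c := by
    intro hc
    exact absurd (Nat.mul_le_mul_left m hc) (by omega)
  have hc1 : c = 1 := by
    rcases Nat.eq_zero_or_pos c with rfl | h
    · simp at h0
    · omega
  rw [hc1, mul_one]

noncomputable def upnorm (σ : RingAut S) (s : ℕ) (α : Sˣ) : Sˣ :=
  ∏ j ∈ Finset.range s, Units.map ((σ ^ j : RingAut S) : S ≃+* S).toRingHom.toMonoidHom α

lemma upnorm_coe (σ : RingAut S) (s : ℕ) (α : Sˣ) :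
    ((upnorm σ s α : Sˣ) : S) = pnorm σ s (α : S) := by
  simp [upnorm, pnorm]

lemma pow_pow_apply (σ : RingAut S) (i j : ℕ) (x : S) :
    (σ ^ i) ((σ ^ j) x) = (σ ^ (i + j)) x := by
  rw [pow_add]; rfl

end AuxD
/-- Lemma `le:3.2 general with b in S.II`: if there is a Hamming-weight
preserving isomorphism `G : S_a → S_b` with `G|_S = τ` commuting with `σ`,
then `⟨b, N_m^σ(S^×)⟩ = ⟨τ(a), N_m^σ(S^×)⟩` as subgroups of `S^×`. -/
theorem stmt13 {S : Type*} [CommRing S] (σ τ : RingAut S) (n : ℕ)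
    (hn : orderOf σ = n) (hn0 : 0 < n) (m : ℕ) (hm : 0 < m)
    (hcomm : ∀ x, τ (σ x) = σ (τ x)) (a b : Sˣ)
    (G : (Fin m → S) → (Fin m → S))
    (hhom : IsPetitHom σ m (constF m (a : S)) (constF m (b : S)) G)
    (hbij : Function.Bijective G)
    (hres : ∀ c : S, G (mono m c 0) = mono m (τ c) 0)
    (hwtp : ∀ x, hwt (G x) = hwt x) :
    Subgroup.closure ({b} ∪ {u : Sˣ | ∃ α : Sˣ, (u : S) = pnorm σ m (α : S)})
      = Subgroup.closure
          ({Units.map τ.toRingHom.toMonoidHom a} ∪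
            {u : Sˣ | ∃ α : Sˣ, (u : S) = pnorm σ m (α : S)}) := by
  classical
  by_cases htriv : (1 : S) = 0
  · have hS : ∀ s : S, s = 0 := fun s => by
      calc s = s * 1 := (mul_one s).symm
        _ = s * 0 := by rw [htriv]
        _ = 0 := mul_zero s
    ext u
    have hu : u = 1 := Units.ext (by rw [hS (u : S), hS ((1 : Sˣ) : S)])
    simp [hu, one_mem]
  rcases eq_or_lt_of_le (show 1 ≤ m by omega) with hm1 | hm2
  · have hm1' : m = 1 := hm1.symm
    subst hm1'
    have h1 : ∀ c : Sˣ,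
        Subgroup.closure ({c} ∪ {u : Sˣ | ∃ β : Sˣ, (u : S) = pnorm σ 1 (β : S)}) = ⊤ := by
      intro c
      rw [Subgroup.eq_top_iff']
      intro u
      exact Subgroup.subset_closure (Or.inr ⟨u, (pnorm_one_eq σ _).symm⟩)
    rw [h1, h1]
  -- main case: 2 ≤ m, nontrivial ring
  have hm0 : 0 < m := hm
  obtain ⟨hGadd, hGmul, hGone⟩ := hhom
  have hG0 : G 0 = 0 := by
    have h := hGadd 0 0
    rw [add_zero] at h
    exact (left_eq_add.mp h)
  have G_finsum : ∀ (s : Finset (Fin m)) (f : Fin m → Fin m → S),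
      G (∑ i ∈ s, f i) = ∑ i ∈ s, G (f i) := by
    intro s f
    induction s using Finset.cons_induction with
    | empty => simpa using hG0
    | cons i s hi ih => rw [Finset.sum_cons, Finset.sum_cons, hGadd, ih]
  set T : Fin m → S := mono m (1 : S) 1 with hTdef
  have hwT : hwt (G T) = 1 := by
    rw [hwtp, hTdef, hwt_mono htriv (by omega : 1 < m)]
  obtain ⟨κ, hGT, hκ0⟩ := exists_of_hwt_one (G T) hwT
  set k : ℕ := (κ : ℕ) with hkdef
  set α : S := G T κ with hαdef
  have hk : k < m := κ.isLt
  have hGTm : G T = mono m α k := hGT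
  -- G on lpow
  have G_lpow : ∀ s, G (lpow σ m (constF m (a : S)) T s)
      = lpow σ m (constF m (b : S)) (G T) s := by
    intro s
    induction s with
    | zero => exact hGone
    | succ s ih => simp only [lpow]; rw [hGmul, ih]
  have lpowT : ∀ s, s < m → lpow σ m (constF m (a : S)) T s = mono m 1 s := by
    intro s
    induction s with
    | zero => intro _; rfl
    | succ s ih =>
      intro hs
      simp only [lpow]
      rw [ih (by omega), hTdef, petitMul_mono_lt σ (a : S) 1 1 (by omega) (by omega) (by omega)]
      have h1 : (1 : S) * (σ ^ 1) 1 = 1 := by simp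
      rw [h1, Nat.add_comm]
  have lpowTm : lpow σ m (constF m (a : S)) T m = mono m (a : S) 0 := by
    have h1 : lpow σ m (constF m (a : S)) T ((m - 1) + 1) = mono m (a : S) 0 := by
      simp only [lpow]
      rw [lpowT (m - 1) (by omega), hTdef,
        petitMul_mono_ge σ (a : S) 1 1 (by omega) (by omega) (by omega)]
      rw [show 1 + (m - 1) - m = 0 by omega]
      have h3 : (1 : S) * (σ ^ 1) 1 * (σ ^ 0) (a : S) = (a : S) := by
        simp [ringAut_one_apply]
      rw [h3]
    rw [show (m - 1) + 1 = m by omega] at h1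
    exact h1
  have G_mono : ∀ (c : S) (i : ℕ), i < m →
      G (mono m c i) = mono m (τ c * Cc σ (b : S) α k m i) (i * k % m) := by
    intro c i hi
    have h1 : mono m c i = petitMul σ m (constF m (a : S)) (mono m c 0) (mono m 1 i) := by
      rw [mono0_mul σ (a : S) c 1 hm0 hi, mul_one]
    rw [h1, hGmul, hres, ← lpowT i hi, G_lpow, hGTm,
      lpow_mono σ (b : S) α hk hm2 i,
      mono0_mul σ (b : S) (τ c) _ hm0 (Nat.mod_lt _ hm0)]
  have Dinj : ∀ i j : ℕ, i < m → j < m → i * k % m = j * k % m → i = j := by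
    intro i j hi hj hEq
    by_contra hne
    have hx : hwt (mono m (1 : S) i + mono m 1 j) = 2 := hwt_pair hi hj hne htriv
    have hGx : G (mono m (1 : S) i + mono m 1 j)
        = mono m (τ 1 * Cc σ (b : S) α k m i + τ 1 * Cc σ (b : S) α k m j) (j * k % m) := by
      rw [hGadd, G_mono 1 i hi, G_mono 1 j hj, hEq, mono_add]
    have h1 := hwtp (mono m (1 : S) i + mono m 1 j)
    rw [hGx, hx] at h1
    have h2 := hwt_le_one (m := m) (τ 1 * Cc σ (b : S) α k m i + τ 1 * Cc σ (b : S) α k m j)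
      (j * k % m)
    omega
  have hx_sum : ∀ x : Fin m → S, x = ∑ i : Fin m, mono m (x i) (i : ℕ) := by
    intro x
    funext e
    rw [Finset.sum_apply, Finset.sum_eq_single e]
    · simp [mono]
    · intro i _ hne
      have h : (e : ℕ) ≠ (i : ℕ) := fun h => hne ((Fin.ext h).symm)
      simp [mono, h]
    · simp
  have G_sum : ∀ x : Fin m → S,
      G x = ∑ i : Fin m, mono m (τ (x i) * Cc σ (b : S) α k m (i : ℕ)) ((i : ℕ) * k % m) := by
    intro x
    conv_lhs => rw [hx_sum x]
    rw [G_finsum]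
    exact Finset.sum_congr rfl fun i _ => G_mono (x i) (i : ℕ) i.isLt
  have Cunit : ∀ i : ℕ, i < m → IsUnit (Cc σ (b : S) α k m i) := by
    intro i hi
    obtain ⟨y, hy⟩ := hbij.2 (mono m (1 : S) (i * k % m))
    have h1 : (∑ i' : Fin m, mono m (τ (y i') * Cc σ (b : S) α k m (i' : ℕ)) ((i' : ℕ) * k % m))
        = mono m (1 : S) (i * k % m) := by rw [← G_sum y, hy]
    have h2 := congrFun h1 ⟨i * k % m, Nat.mod_lt _ hm0⟩
    rw [Finset.sum_apply, Finset.sum_eq_single (⟨i, hi⟩ : Fin m)] at h2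
    · simp only [mono, if_pos rfl] at h2
      exact IsUnit.of_mul_eq_one _ (by rw [mul_comm] at h2; exact h2)
    · intro i' _ hne
      simp only [mono]
      rw [if_neg]
      intro hEq
      exact hne (Fin.ext (Dinj (i' : ℕ) i i'.isLt hi hEq.symm))
    · simp
  have hCc1 : Cc σ (b : S) α k m 1 = α := by
    show Cc σ (b : S) α k m (0 + 1) = α
    rw [Cc, if_pos (by simpa using hk)]
    simp [Cc]
  have hαu : IsUnit α := hCc1 ▸ Cunit 1 (by omega)
  have hk1 : 1 ≤ k := by
    by_contra h
    have hk0 : k = 0 := by omega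
    have := Dinj 0 1 hm0 (by omega) (by simp [hk0])
    omega
  have hDsurj : ∀ r, r < m → ∃ i, i < m ∧ i * k % m = r := by
    intro r hr
    have hinj : Function.Injective
        (fun i : Fin m => (⟨(i : ℕ) * k % m, Nat.mod_lt _ hm0⟩ : Fin m)) := by
      intro i j hEq
      exact Fin.ext (Dinj i j i.isLt j.isLt (congrArg Fin.val hEq))
    obtain ⟨i, hi⟩ := Finite.surjective_of_injective hinj ⟨r, hr⟩
    exact ⟨i, i.isLt, congrArg Fin.val hi⟩
  have hcop : Nat.gcd k m = 1 := by
    obtain ⟨i, hi, hik⟩ := hDsurj 1 (by omega)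
    have h0 := Nat.div_add_mod (i * k) m
    have hd : Nat.gcd k m ∣ 1 := by
      have hk' : Nat.gcd k m ∣ i * k := Dvd.dvd.mul_left (Nat.gcd_dvd_left k m) i
      have hm' : Nat.gcd k m ∣ m * (i * k / m) := Dvd.dvd.mul_right (Nat.gcd_dvd_right k m) _
      have h3 := Nat.dvd_sub hk' hm'
      rw [show i * k - m * (i * k / m) = 1 by omega] at h3
      exact h3
    exact Nat.dvd_one.mp hd
  have hcommn : ∀ (j : ℕ) (x : S), τ ((σ ^ j) x) = (σ ^ j) (τ x) := by
    intro j
    induction j with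
    | zero => intro x; simp [ringAut_one_apply]
    | succ j ih =>
      intro x
      rw [← pow_succ_apply, ← pow_succ_apply, hcomm, ih]
  have hσk : (σ : RingAut S) ^ k = σ := by
    have key : ∀ y : S, α * (σ ^ k) y = α * σ y := by
      intro y
      obtain ⟨x, rfl⟩ := τ.surjective y
      have e1 : petitMul σ m (constF m (a : S)) T (mono m x 0) = mono m (σ x) 1 := by
        rw [hTdef, petitMul_mono_lt σ (a : S) 1 x (by omega) (by omega) (by omega)]
        rw [show (1 : S) * (σ ^ 1) x = σ x by rw [pow_one, one_mul]]
      have e2 : petitMul σ m (constF m (a : S)) (mono m (σ x) 0) T = mono m (σ x) 1 := by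
        rw [hTdef, petitMul_mono_lt σ (a : S) (σ x) 1 (by omega) (by omega) (by omega)]
        rw [show σ x * (σ ^ 0) 1 = σ x by simp [ringAut_one_apply], Nat.zero_add]
      have e3 : petitMul σ m (constF m (b : S)) (G T) (G (mono m x 0))
          = petitMul σ m (constF m (b : S)) (G (mono m (σ x) 0)) (G T) := by
        rw [← hGmul, ← hGmul, e1, e2]
      rw [hGTm, hres, hres] at e3
      rw [petitMul_mono_lt σ (b : S) α (τ x) hk (by omega) (by omega : k + 0 < m),
          petitMul_mono_lt σ (b : S) (τ (σ x)) α (by omega) hk (by omega : 0 + k < m)] at e3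
      simp only [Nat.add_zero, Nat.zero_add, pow_zero, ringAut_one_apply] at e3
      have h4 := mono_coeff_inj hk e3
      rw [hcomm] at h4
      exact h4.trans (mul_comm _ _)
    refine RingEquiv.ext fun y => hαu.mul_left_cancel ?_
    exact key y
  have hDpow : ∀ i, i < m → (σ : RingAut S) ^ (i * k % m) = σ ^ i := by
    intro i hi
    rcases Nat.eq_zero_or_pos i with rfl | hipos
    · norm_num
    have hDi0 : i * k % m ≠ 0 := fun h =>
      absurd (Dinj i 0 hi hm0 (by simpa using h)) (by omega)
    have hDmi0 : (m - i) * k % m ≠ 0 := fun h =>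
      absurd (Dinj (m - i) 0 (by omega) hm0 (by simpa using h)) (by omega)
    have hsum : i * k % m + (m - i) * k % m = m := by
      apply eq_m_of_dvd hm0
      · apply Nat.dvd_of_mod_eq_zero
        rw [← Nat.add_mod, ← Nat.add_mul, show i + (m - i) = m by omega, Nat.mul_mod_right]
      · omega
      · have h1 := Nat.mod_lt (i * k) hm0
        have h2 := Nat.mod_lt ((m - i) * k) hm0
        omega
    have hmi : m - i < m := by omega
    have key : ∀ d : S, τ ((σ ^ i) d * (a : S))
        = Cc σ (b : S) α k m i
          * ((σ ^ (i * k % m)) (τ d * Cc σ (b : S) α k m (m - i))) * (b : S) := by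
      intro d
      have e1 : petitMul σ m (constF m (a : S)) (mono m 1 i) (mono m d (m - i))
          = mono m ((σ ^ i) d * (a : S)) 0 := by
        rw [petitMul_mono_ge σ (a : S) 1 d hi hmi (by omega)]
        rw [show i + (m - i) - m = 0 by omega]
        rw [show (1 : S) * (σ ^ i) d * (σ ^ 0) (a : S) = (σ ^ i) d * (a : S) by
          simp [ringAut_one_apply]]
      have e2 := hGmul (mono m 1 i) (mono m d (m - i))
      rw [e1, hres, G_mono 1 i hi, G_mono d (m - i) hmi, map_one, one_mul] at e2
      rw [petitMul_mono_ge σ (b : S) _ _ (Nat.mod_lt _ hm0) (Nat.mod_lt _ hm0)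
        (le_of_eq hsum.symm)] at e2
      rw [show i * k % m + (m - i) * k % m - m = 0 by omega] at e2
      simp only [pow_zero, ringAut_one_apply] at e2
      exact mono_coeff_inj hm0 e2
    have key1 := key 1
    simp only [map_one, one_mul] at key1
    refine RingEquiv.ext fun y => ?_
    obtain ⟨d, rfl⟩ := τ.surjective y
    have hkey := key d
    rw [map_mul, hcommn i d, map_mul] at hkey
    have hua : IsUnit (τ (a : S)) := (a.isUnit).map (τ : S ≃+* S)
    have hcanc : τ (a : S) * (σ ^ (i * k % m)) (τ d) = τ (a : S) * (σ ^ i) (τ d) := by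
      linear_combination (σ ^ (i * k % m)) (τ d) * key1 - hkey
    exact hua.mul_left_cancel hcanc
  have hτaCc : τ (a : S) = Cc σ (b : S) α k m m := by
    have h1 := G_lpow m
    rw [lpowTm, hres, hGTm, lpow_mono σ (b : S) α hk hm2 m, Nat.mul_mod_right] at h1
    exact mono_coeff_inj hm0 h1
  have hclosed : ∀ s, s < m →
      Cc σ (b : S) α k m s = pnorm σ s α * ((σ ^ s) (b : S)) ^ (s * k / m) := by
    intro s
    induction s with
    | zero => intro _; simp [Cc, pnorm]
    | succ s ih =>
      intro hs
      have hCs := ih (by omega)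
      have hdm := Nat.div_add_mod (s * k) m
      have hsm : (s + 1) * k = m * (s * k / m) + (s * k % m + k) := by
        have h2 : (s + 1) * k = s * k + k := by ring
        omega
      show Cc σ (b : S) α k m (s + 1) = _
      rw [Cc, hCs, hσk]
      by_cases hwrap : k + s * k % m < m
      · rw [if_pos hwrap, mul_one]
        have hdiv : (s + 1) * k / m = s * k / m := by
          rw [hsm, Nat.mul_add_div hm0,
            Nat.div_eq_of_lt (show s * k % m + k < m by omega), Nat.add_zero]
        rw [hdiv, map_mul, map_pow, pow_succ_apply, pnorm_succ]
        ring
      · rw [if_neg (by omega)]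
        have hdiv : (s + 1) * k / m = s * k / m + 1 := by
          rw [hsm, Nat.mul_add_div hm0]
          congr 1
          have hlt2 : s * k % m + k < 2 * m := by
            have := Nat.mod_lt (s * k) hm0
            omega
          rw [show s * k % m + k = m * 1 + (s * k % m + k - m) by omega,
            Nat.mul_add_div hm0, Nat.div_eq_of_lt (show s * k % m + k - m < m by omega),
            Nat.add_zero]
        rw [hdiv, hDpow (s + 1) hs, map_mul, map_pow, pow_succ_apply, pnorm_succ, pow_succ]
        ring
  have hexp1 : (m - 1) * k = m * (k - 1) + (m - k) := by
    have h1 : m ≤ m * k := Nat.le_mul_of_pos_right m (by omega)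
    have h2 : k ≤ m * k := Nat.le_mul_of_pos_left k (by omega)
    have h3 : (m - 1) * k = m * k - k := by rw [Nat.sub_mul, one_mul]
    have h4 : m * (k - 1) + m = m * k := by
      rw [← Nat.mul_succ]
      congr 1
      omega
    omega
  have hDm1mod : (m - 1) * k % m = m - k := by
    rw [hexp1, Nat.mul_add_mod, Nat.mod_eq_of_lt (by omega)]
  have hDm1div : (m - 1) * k / m = k - 1 := by
    rw [hexp1, Nat.mul_add_div hm0, Nat.div_eq_of_lt (by omega), Nat.add_zero]
  have hCm : Cc σ (b : S) α k m m
      = pnorm σ m α * ((σ ^ m) (b : S)) ^ (k - 1) * (b : S) := by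
    have e : Cc σ (b : S) α k m ((m - 1) + 1)
        = α * σ (Cc σ (b : S) α k m (m - 1)) * (b : S) := by
      rw [Cc, hσk, if_neg (by rw [hDm1mod]; omega)]
      congr 1
      rw [show (m - 1 + 1) = m by omega, Nat.mul_mod_right, pow_zero]
      exact ringAut_one_apply _
    rw [show (m - 1) + 1 = m by omega] at e
    have hpn : pnorm σ m α = α * σ (pnorm σ (m - 1) α) := by
      rw [← pnorm_succ]
      congr 1
      omega
    rw [e, hclosed (m - 1) (by omega), hDm1div, map_mul, map_pow, pow_succ_apply,
      show m - 1 + 1 = m by omega, hpn]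
    ring
  have hbfix : k = 1 ∨ ((σ : RingAut S) ^ m = 1 ∧ σ (b : S) = (b : S)) := by
    rcases eq_or_lt_of_le hk1 with h1 | hk2
    · exact Or.inl h1.symm
    right
    have hknm : ¬ (k ∣ m) := by
      intro hd
      have h1 : k ∣ Nat.gcd k m := Nat.dvd_gcd dvd_rfl hd
      rw [hcop] at h1
      have := Nat.le_of_dvd one_pos h1
      omega
    set i0 : ℕ := m / k + 1 with hi0def
    have hdmk := Nat.div_add_mod m k
    have hmodk : m % k ≠ 0 := fun h => hknm (Nat.dvd_of_mod_eq_zero h)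
    have hmodklt : m % k < k := Nat.mod_lt m (by omega)
    have hi0k : i0 * k = k * (m / k) + k := by rw [hi0def]; ring
    have hlow : m < i0 * k := by omega
    have hhigh : i0 * k < 2 * m := by
      have h1 : k * (m / k) ≤ m := by omega
      omega
    have hi0m : i0 < m := by
      have h1 : m / k ≤ m / 2 := Nat.div_le_div_left hk2 (by omega)
      omega
    have hi02 : 2 ≤ i0 := by
      have h1 : 1 ≤ m / k := (Nat.one_le_div_iff (by omega)).mpr (by omega)
      omega
    have hw1 : i0 * k / m = 1 := by
      rw [show i0 * k = m * 1 + (i0 * k - m) by omega, Nat.mul_add_div hm0,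
        Nat.div_eq_of_lt (by omega), Nat.add_zero]
    have hD0 : i0 * k % m = i0 * k - m := by
      conv_lhs => rw [show i0 * k = m * 1 + (i0 * k - m) by omega]
      rw [Nat.mul_add_mod, Nat.mod_eq_of_lt (by omega)]
    have hσm : (σ : RingAut S) ^ m = 1 := by
      have h1 : (σ : RingAut S) ^ (i0 * k) = σ ^ i0 := by
        rw [mul_comm i0 k, pow_mul, hσk]
      have h2 : (σ : RingAut S) ^ (i0 * k) = σ ^ (i0 * k - m) * σ ^ m := by
        rw [← pow_add]
        congr 1
        omega
      have h3 := hDpow i0 hi0m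
      rw [hD0] at h3
      have h4 : σ ^ (i0 * k - m) * σ ^ m = σ ^ (i0 * k - m) * 1 := by
        rw [mul_one, ← h2, h1, ← h3]
      exact mul_left_cancel h4
    have hτa2 : τ (a : S) = pnorm σ m α * (b : S) ^ k := by
      rw [hτaCc, hCm, hσm, ringAut_one_apply, mul_assoc, ← pow_succ,
        show k - 1 + 1 = k by omega]
    have hbunit : IsUnit (b : S) := b.isUnit
    have main : ∀ i j : ℕ, 0 < i → i < m → 0 < j → j < m → m ≤ i + j →
        ((σ ^ (i + j - m)) (b : S)) ^ (i * k / m) = ((σ ^ i) (b : S)) ^ (i * k / m) := by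
      intro i j hipos hi hjpos hj hij
      have hr : i + j - m < m := by omega
      have e1 : petitMul σ m (constF m (a : S)) (mono m 1 i) (mono m 1 j)
          = mono m ((σ ^ (i + j - m)) (a : S)) (i + j - m) := by
        rw [petitMul_mono_ge σ (a : S) 1 1 hi hj hij]
        rw [show (1 : S) * (σ ^ i) 1 * (σ ^ (i + j - m)) (a : S)
          = (σ ^ (i + j - m)) (a : S) by simp]
      have e2 := hGmul (mono m 1 i) (mono m 1 j)
      rw [e1, G_mono _ (i + j - m) hr, G_mono 1 i hi, G_mono 1 j hj] at e2
      simp only [map_one, one_mul] at e2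
      have hdmi := Nat.div_add_mod (i * k) m
      have hdmj := Nat.div_add_mod (j * k) m
      have hdmr := Nat.div_add_mod ((i + j - m) * k) m
      have hiltm := Nat.mod_lt (i * k) hm0
      have hjltm := Nat.mod_lt (j * k) hm0
      have hrltm := Nat.mod_lt ((i + j - m) * k) hm0
      have hij_k : i * k + j * k = m * k + (i + j - m) * k := by
        have h5 : (i + j) * k = (m + (i + j - m)) * k := by
          congr 1
          omega
        calc i * k + j * k = (i + j) * k := by ring
          _ = (m + (i + j - m)) * k := h5
          _ = m * k + (i + j - m) * k := by ring
      have hmodsum : (i * k % m + j * k % m) % m = (i + j - m) * k % m := by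
        rw [← Nat.add_mod, hij_k, Nat.mul_add_mod]
      -- names
      have hijb : (σ ^ (i + j)) (b : S) = (σ ^ (i + j - m)) (b : S) := by
        have h6 : (σ : RingAut S) ^ (i + j) = σ ^ m * σ ^ (i + j - m) := by
          rw [← pow_add]
          congr 1
          omega
        rw [h6, hσm, one_mul]
      have hpn2 : pnorm σ i α * (σ ^ i) (pnorm σ j α) = pnorm σ ((i + j - m) + m) α := by
        rw [← pnorm_add]
        congr 1
        omega
      have hpn1 : pnorm σ (i + j - m) α * (σ ^ (i + j - m)) (pnorm σ m α)
          = pnorm σ ((i + j - m) + m) α := (pnorm_add σ (i + j - m) m α).symm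
      have hPu : IsUnit (pnorm σ ((i + j - m) + m) α) := isUnit_pnorm σ _ hαu
      have hXu : IsUnit ((σ ^ (i + j - m)) (b : S)) :=
        hbunit.map ((σ ^ (i + j - m) : RingAut S) : S ≃+* S)
      by_cases hε : i * k % m + j * k % m < m
      · rw [petitMul_mono_lt σ (b : S) _ _ hiltm hjltm hε] at e2
        have hidx : i * k % m + j * k % m = (i + j - m) * k % m := by
          rw [← hmodsum, Nat.mod_eq_of_lt hε]
        rw [hidx, hDpow i hi] at e2
        have hco := mono_coeff_inj hrltm e2
        rw [hcommn, hτa2, hclosed _ hr, hclosed i hi, hclosed j hj] at hco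
        simp only [map_mul, map_pow, pow_pow_apply] at hco
        rw [hijb] at hco
        have hw : k + (i + j - m) * k / m = i * k / m + j * k / m := by
          have hmm : m * (k + (i + j - m) * k / m) = m * (i * k / m + j * k / m) := by
            rw [Nat.mul_add, Nat.mul_add]
            omega
          exact Nat.eq_of_mul_eq_mul_left hm0 hmm
        have hL : (σ ^ (i + j - m)) (pnorm σ m α) * ((σ ^ (i + j - m)) (b : S)) ^ k
            * (pnorm σ (i + j - m) α * ((σ ^ (i + j - m)) (b : S)) ^ ((i + j - m) * k / m))
            = pnorm σ ((i + j - m) + m) α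
              * ((σ ^ (i + j - m)) (b : S)) ^ (k + (i + j - m) * k / m) := by
          rw [← hpn1]; ring
        have hR : pnorm σ i α * ((σ ^ i) (b : S)) ^ (i * k / m)
            * ((σ ^ i) (pnorm σ j α) * ((σ ^ (i + j - m)) (b : S)) ^ (j * k / m))
            = pnorm σ ((i + j - m) + m) α
              * (((σ ^ i) (b : S)) ^ (i * k / m)
                * ((σ ^ (i + j - m)) (b : S)) ^ (j * k / m)) := by
          rw [← hpn2]; ring
        have hco2 : pnorm σ ((i + j - m) + m) α
              * ((σ ^ (i + j - m)) (b : S)) ^ (k + (i + j - m) * k / m)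
            = pnorm σ ((i + j - m) + m) α
              * (((σ ^ i) (b : S)) ^ (i * k / m)
                * ((σ ^ (i + j - m)) (b : S)) ^ (j * k / m)) := by
          rw [← hL, ← hR]
          linear_combination hco
        rw [hw] at hco2
        have hco3 : pnorm σ ((i + j - m) + m) α
              * (((σ ^ (i + j - m)) (b : S)) ^ (j * k / m)
                * ((σ ^ (i + j - m)) (b : S)) ^ (i * k / m))
            = pnorm σ ((i + j - m) + m) α
              * (((σ ^ (i + j - m)) (b : S)) ^ (j * k / m)
                * ((σ ^ i) (b : S)) ^ (i * k / m)) := by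
          calc _ = pnorm σ ((i + j - m) + m) α
              * ((σ ^ (i + j - m)) (b : S)) ^ (i * k / m + j * k / m) := by ring
          _ = _ := by rw [hco2]; ring
        exact ((hXu.pow _).mul_left_cancel (hPu.mul_left_cancel hco3))
      · push_neg at hε
        rw [petitMul_mono_ge σ (b : S) _ _ hiltm hjltm hε] at e2
        have hidx : i * k % m + j * k % m - m = (i + j - m) * k % m := by
          have h8 : (i * k % m + j * k % m) % m = i * k % m + j * k % m - m := by
            rw [Nat.mod_eq_sub_mod hε]
            exact Nat.mod_eq_of_lt (by omega)
          rw [← h8, hmodsum]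
        rw [hidx, hDpow i hi, hDpow _ hr] at e2
        have hco := mono_coeff_inj hrltm e2
        rw [hcommn, hτa2, hclosed _ hr, hclosed i hi, hclosed j hj] at hco
        simp only [map_mul, map_pow, pow_pow_apply] at hco
        rw [hijb] at hco
        have hw : k + (i + j - m) * k / m = i * k / m + j * k / m + 1 := by
          have hmm : m * (k + (i + j - m) * k / m) = m * (i * k / m + j * k / m + 1) := by
            rw [Nat.mul_add, Nat.mul_add, Nat.mul_add, Nat.mul_one]
            omega
          exact Nat.eq_of_mul_eq_mul_left hm0 hmm
        have hL : (σ ^ (i + j - m)) (pnorm σ m α) * ((σ ^ (i + j - m)) (b : S)) ^ k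
            * (pnorm σ (i + j - m) α * ((σ ^ (i + j - m)) (b : S)) ^ ((i + j - m) * k / m))
            = pnorm σ ((i + j - m) + m) α
              * ((σ ^ (i + j - m)) (b : S)) ^ (k + (i + j - m) * k / m) := by
          rw [← hpn1]; ring
        have hR : pnorm σ i α * ((σ ^ i) (b : S)) ^ (i * k / m)
            * ((σ ^ i) (pnorm σ j α) * ((σ ^ (i + j - m)) (b : S)) ^ (j * k / m))
            * (σ ^ (i + j - m)) (b : S)
            = pnorm σ ((i + j - m) + m) α
              * (((σ ^ i) (b : S)) ^ (i * k / m)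
                * ((σ ^ (i + j - m)) (b : S)) ^ (j * k / m + 1)) := by
          rw [← hpn2]; ring
        have hco2 : pnorm σ ((i + j - m) + m) α
              * ((σ ^ (i + j - m)) (b : S)) ^ (k + (i + j - m) * k / m)
            = pnorm σ ((i + j - m) + m) α
              * (((σ ^ i) (b : S)) ^ (i * k / m)
                * ((σ ^ (i + j - m)) (b : S)) ^ (j * k / m + 1)) := by
          rw [← hL, ← hR]
          linear_combination hco
        rw [hw] at hco2
        have hco3 : pnorm σ ((i + j - m) + m) α
              * (((σ ^ (i + j - m)) (b : S)) ^ (j * k / m + 1)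
                * ((σ ^ (i + j - m)) (b : S)) ^ (i * k / m))
            = pnorm σ ((i + j - m) + m) α
              * (((σ ^ (i + j - m)) (b : S)) ^ (j * k / m + 1)
                * ((σ ^ i) (b : S)) ^ (i * k / m)) := by
          calc _ = pnorm σ ((i + j - m) + m) α
              * ((σ ^ (i + j - m)) (b : S)) ^ (i * k / m + j * k / m + 1) := by ring
          _ = _ := by rw [hco2]; ring
        exact ((hXu.pow _).mul_left_cancel (hPu.mul_left_cancel hco3))
    have hb1 : (σ ^ i0) (b : S) = (b : S) := by
      have h0 := main i0 (m - i0) (by omega) hi0m (by omega) (by omega) (by omega)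
      rw [show i0 + (m - i0) - m = 0 by omega, hw1, pow_one, pow_one, pow_zero,
        ringAut_one_apply] at h0
      exact h0.symm
    have hb2 : σ (b : S) = (σ ^ i0) (b : S) := by
      have h0 := main i0 (m - i0 + 1) (by omega) hi0m (by omega) (by omega) (by omega)
      rw [show i0 + (m - i0 + 1) - m = 1 by omega, hw1, pow_one, pow_one, pow_one] at h0
      exact h0
    exact ⟨hσm, hb2.trans hb1⟩
  have hfinal : τ (a : S) = pnorm σ m α * (b : S) ^ k := by
    rcases hbfix with h1 | ⟨hσm, _⟩
    · rw [hτaCc, hCm, h1]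
      norm_num
    · rw [hτaCc, hCm, hσm, ringAut_one_apply, mul_assoc, ← pow_succ,
        show k - 1 + 1 = k by omega]
  obtain ⟨uα, huα⟩ := hαu
  set N : Set Sˣ := {u : Sˣ | ∃ β : Sˣ, (u : S) = pnorm σ m (β : S)} with hNdef
  set A : Sˣ := Units.map τ.toRingHom.toMonoidHom a with hAdef
  have hAcoe : (A : S) = τ (a : S) := rfl
  have huP : ((upnorm σ m uα : Sˣ) : S) = pnorm σ m α := by rw [upnorm_coe, huα]
  have huPN : upnorm σ m uα ∈ N := ⟨uα, by rw [upnorm_coe]⟩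
  have hkey : A = upnorm σ m uα * b ^ k := by
    apply Units.ext
    rw [Units.val_mul, Units.val_pow_eq_pow_val, huP, hAcoe, hfinal]
  apply le_antisymm
  · rw [Subgroup.closure_le]
    rintro u (hu | hu)
    · rw [Set.mem_singleton_iff] at hu
      rw [hu]
      simp only [SetLike.mem_coe]
      have hbk : (b : Sˣ) ^ k ∈ Subgroup.closure ({A} ∪ N) := by
        have h1 : (b : Sˣ) ^ k = (upnorm σ m uα)⁻¹ * A := by rw [hkey]; group
        rw [h1]
        exact mul_mem (inv_mem (Subgroup.subset_closure (Or.inr huPN)))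
          (Subgroup.subset_closure (Or.inl rfl))
      rcases eq_or_lt_of_le hk1 with h1 | hk2
      · have h2 : (b : Sˣ) = b ^ k := by rw [← h1, pow_one]
        rw [h2]
        exact hbk
      · rcases hbfix with h1 | ⟨hσm, hσb⟩
        · omega
        have hjb : ∀ j : ℕ, (σ ^ j) (b : S) = (b : S) := by
          intro j
          induction j with
          | zero => rw [pow_zero]; exact ringAut_one_apply _
          | succ j ih => rw [← pow_succ_apply, ih, hσb]
        have hbm : pnorm σ m (b : S) = (b : S) ^ m := by
          calc pnorm σ m (b : S) = ∏ _j ∈ Finset.range m, (b : S) :=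
                Finset.prod_congr rfl fun j _ => hjb j
            _ = (b : S) ^ m := by rw [Finset.prod_const, Finset.card_range]
        have hbmN : (b : Sˣ) ^ m ∈ N :=
          ⟨b, by rw [Units.val_pow_eq_pow_val, hbm]⟩
        have hgcd := Nat.gcd_eq_gcd_ab k m
        rw [hcop] at hgcd
        push_cast at hgcd
        have h2 : ((b : Sˣ) ^ k) ^ (Nat.gcdA k m) * ((b : Sˣ) ^ m) ^ (Nat.gcdB k m) = b := by
          rw [← zpow_natCast (b : Sˣ) k, ← zpow_natCast (b : Sˣ) m, ← zpow_mul,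
            ← zpow_mul, ← zpow_add, ← hgcd, zpow_one]
        rw [← h2]
        have hbmC : (b : Sˣ) ^ m ∈ Subgroup.closure ({A} ∪ N) :=
          Subgroup.subset_closure (Or.inr hbmN)
        exact mul_mem (zpow_mem hbk _) (zpow_mem hbmC _)
    · exact Subgroup.subset_closure (Or.inr hu)
  · rw [Subgroup.closure_le]
    rintro u (hu | hu)
    · rw [Set.mem_singleton_iff] at hu
      rw [hu]
      simp only [SetLike.mem_coe]
      rw [hkey]
      have h3 : upnorm σ m uα ∈ Subgroup.closure ({b} ∪ N) :=
        Subgroup.subset_closure (Or.inr huPN)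
      have h4 : (b : Sˣ) ∈ Subgroup.closure ({b} ∪ N) :=
        Subgroup.subset_closure (Or.inl rfl)
      exact mul_mem h3 (pow_mem h4 k)
    · exact Subgroup.subset_closure (Or.inr hu)
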